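/- (Equation (2.22), second case) Let m ≥ 1 and consider data (Ȳ_1,n_1),…,(Ȳ_{m+1},n_{m+1}). Let i_1(m), i_2(m),… be the SDMMSA indices and μ̂_{j,m} the SDMMSA estimates computed from the first m data points, and let i_1(m+1) denote the first SDMMSA index computed from all m+1 data points. If μ̂_{i_2(m),m} < Ȳ_{m+1} ≤ μ̂_{i_1(m),m} (equivalently, Ȳ_{i_2(m), i_1(m)−1} < Ȳ_{m+1} ≤ Ȳ_{i_1(m), m}), then i_1(m+1) = i_1(m). -/
import Mathlib


open Finset

noncomputable section SDMMSA

/-- Pooled weight `n_{i,j} = ∑_{h=i}^j n_h`. -/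
def pooledWeight (n : ℕ → ℝ) (i j : ℕ) : ℝ := ∑ h ∈ Finset.Icc i j, n h

/-- Pooled (weighted) mean `Ȳ_{i,j} = (∑_{h=i}^j n_h Y_h) / n_{i,j}`. -/
def pooledMean (n Y : ℕ → ℝ) (i j : ℕ) : ℝ :=
  (∑ h ∈ Finset.Icc i j, n h * Y h) / pooledWeight n i j

/-- The first SDMMSA index for the data `(Y_1,n_1),…,(Y_t,n_t)`:
the smallest `j ∈ [1,t]` at which `Ȳ_{j,t} = max_{1 ≤ j' ≤ t} Ȳ_{j',t}`. -/
def firstIdx (n Y : ℕ → ℝ) (t : ℕ) : ℕ :=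
  sInf {j | 1 ≤ j ∧ j ≤ t ∧ ∀ j', 1 ≤ j' → j' ≤ t → pooledMean n Y j' t ≤ pooledMean n Y j t}

/-- Fuel-based recursion implementing the SDMMSA step-down procedure: on data range `[1,t]`,
every `i ≥ i₁ = firstIdx n Y t` gets the pooled mean `Ȳ_{i₁,t}` of the top block, and for
`i < i₁` we recurse on the data range `[1, i₁ - 1]`.  A fuel of `t` suffices since the
range shrinks strictly at each step. -/
def sdmmsaAux (n Y : ℕ → ℝ) : ℕ → ℕ → ℕ → ℝ
  | 0, _, _ => 0
  | fuel + 1, t, i =>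
      if firstIdx n Y t ≤ i then pooledMean n Y (firstIdx n Y t) t
      else sdmmsaAux n Y fuel (firstIdx n Y t - 1) i

/-- `muhat n Y k i` is the SDMMSA estimate `μ̂_i` computed from the data
`(Y_1,n_1),…,(Y_k,n_k)`. -/
def muhat (n Y : ℕ → ℝ) (k i : ℕ) : ℝ := sdmmsaAux n Y k k i

/-- The SDMMSA indices `i_u` computed from the data `(Y_1,n_1),…,(Y_k,n_k)`:
`sdIdx n Y k 0 = i_0 = k+1` and `i_{u+1}` is the first SDMMSA index of `[1, i_u - 1]`. -/
def sdIdx (n Y : ℕ → ℝ) (k : ℕ) : ℕ → ℕ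
  | 0 => k + 1
  | u + 1 => firstIdx n Y (sdIdx n Y k u - 1)

/-- The number of steps `h` of the SDMMSA: the first `u` with `i_u = 1`. -/
def sdSteps (n Y : ℕ → ℝ) (k : ℕ) : ℕ := sInf {u | sdIdx n Y k u = 1}

end SDMMSA

section Helpers

private lemma avg_le' {a b x y c : ℝ} (ha : 0 < a) (hb : 0 < b) (hx : x ≤ c) (hy : y ≤ c) :
    (a * x + b * y) / (a + b) ≤ c := by
  rw [div_le_iff₀ (by linarith)]; nlinarith

private lemma le_avg' {a b x y : ℝ} (ha : 0 < a) (hb : 0 < b) (h : y ≤ x) :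
    y ≤ (a * x + b * y) / (a + b) := by
  rw [le_div_iff₀ (by linarith)]; nlinarith

private lemma avg_le_left' {a b x y : ℝ} (ha : 0 < a) (hb : 0 < b)
    (h : y ≤ (a * x + b * y) / (a + b)) : (a * x + b * y) / (a + b) ≤ x := by
  rw [le_div_iff₀ (by linarith)] at h
  rw [div_le_iff₀ (by linarith)]
  nlinarith

private lemma avg_lt' {a b x y : ℝ} (ha : 0 < a) (hb : 0 < b) (h : x < y) :
    (a * x + b * y) / (a + b) < y := by
  rw [div_lt_iff₀ (by linarith)]; nlinarith

private lemma Icc_split (i k j : ℕ) (h1 : i ≤ k) (h2 : k < j) :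
    Finset.Icc i j = Finset.Icc i k ∪ Finset.Icc (k + 1) j := by
  ext x; simp only [Finset.mem_Icc, Finset.mem_union]; omega

private lemma Icc_disj (i k j : ℕ) : Disjoint (Finset.Icc i k) (Finset.Icc (k + 1) j) := by
  rw [Finset.disjoint_left]
  intro x hx hx'
  simp only [Finset.mem_Icc] at hx hx'
  omega

private lemma pooledWeight_split (n : ℕ → ℝ) (i k j : ℕ) (h1 : i ≤ k) (h2 : k < j) :
    pooledWeight n i j = pooledWeight n i k + pooledWeight n (k + 1) j := by
  unfold pooledWeight
  rw [Icc_split i k j h1 h2, Finset.sum_union (Icc_disj i k j)]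

private lemma pooledWeight_pos (n : ℕ → ℝ) (i j : ℕ) (hij : i ≤ j)
    (hn : ∀ h, i ≤ h → h ≤ j → 0 < n h) : 0 < pooledWeight n i j := by
  unfold pooledWeight
  apply Finset.sum_pos
  · intro h hh
    simp only [Finset.mem_Icc] at hh
    exact hn h hh.1 hh.2
  · exact ⟨i, by simp [Finset.mem_Icc, hij]⟩

private lemma pooledMean_split (n Y : ℕ → ℝ) (i k j : ℕ) (h1 : i ≤ k) (h2 : k < j)
    (ha : 0 < pooledWeight n i k) (hb : 0 < pooledWeight n (k + 1) j) :
    pooledMean n Y i j = (pooledWeight n i k * pooledMean n Y i k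
      + pooledWeight n (k + 1) j * pooledMean n Y (k + 1) j)
      / (pooledWeight n i k + pooledWeight n (k + 1) j) := by
  unfold pooledMean
  rw [pooledWeight_split n i k j h1 h2, Icc_split i k j h1 h2,
    Finset.sum_union (Icc_disj i k j)]
  field_simp

private lemma pooledMean_single (n Y : ℕ → ℝ) (t : ℕ) (h : n t ≠ 0) :
    pooledMean n Y t t = Y t := by
  unfold pooledMean pooledWeight
  rw [Finset.Icc_self, Finset.sum_singleton, Finset.sum_singleton,
    mul_div_cancel_left₀ _ h]

private lemma firstIdx_spec (n Y : ℕ → ℝ) (t : ℕ) (ht : 1 ≤ t) :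
    1 ≤ firstIdx n Y t ∧ firstIdx n Y t ≤ t ∧
      ∀ j', 1 ≤ j' → j' ≤ t → pooledMean n Y j' t ≤ pooledMean n Y (firstIdx n Y t) t := by
  have hne : {j | 1 ≤ j ∧ j ≤ t ∧
      ∀ j', 1 ≤ j' → j' ≤ t → pooledMean n Y j' t ≤ pooledMean n Y j t}.Nonempty := by
    obtain ⟨b, hb, hmax⟩ := Finset.exists_max_image (Finset.Icc 1 t)
      (fun j => pooledMean n Y j t) ⟨1, by simp [Finset.mem_Icc, ht]⟩
    simp only [Finset.mem_Icc] at hb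
    exact ⟨b, hb.1, hb.2, fun j' h1 h2 => hmax j' (by simp [Finset.mem_Icc]; omega)⟩
  exact Nat.sInf_mem hne

private lemma sdmmsaAux_eval (n Y : ℕ → ℝ) (fuel t i : ℕ) (hf : 1 ≤ fuel)
    (hi : firstIdx n Y t ≤ i) :
    sdmmsaAux n Y fuel t i = pooledMean n Y (firstIdx n Y t) t := by
  cases fuel with
  | zero => omega
  | succ f => simp [sdmmsaAux, hi]

private lemma sdmmsaAux_step (n Y : ℕ → ℝ) (f t i : ℕ) (hi : i < firstIdx n Y t) :
    sdmmsaAux n Y (f + 1) t i = sdmmsaAux n Y f (firstIdx n Y t - 1) i := by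
  simp [sdmmsaAux, Nat.not_le.mpr hi]

end Helpers

/-- eq. (2.22), second case: if the SDMMSA on the first `m` points takes at
least two steps (so that `i_2(m) = sdIdx n Y m 2` is defined, i.e. `i_1(m) > 1`) and
`μ̂_{i_2(m),m} < Ȳ_{m+1} ≤ μ̂_{i_1(m),m}`, then `i_1(m+1) = i_1(m)`. -/
theorem firstIdx_succ_of_middle_last (m : ℕ) (hm : 1 ≤ m) (n Y : ℕ → ℝ)
    (hn : ∀ h, 1 ≤ h → h ≤ m + 1 → 0 < n h)
    (htwo : 1 < sdIdx n Y m 1)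
    (hlow : muhat n Y m (sdIdx n Y m 2) < Y (m + 1))
    (hhigh : Y (m + 1) ≤ muhat n Y m (sdIdx n Y m 1)) :
    firstIdx n Y (m + 1) = sdIdx n Y m 1 := by
  have hidx1 : sdIdx n Y m 1 = firstIdx n Y m := by simp [sdIdx]
  have hidx2 : sdIdx n Y m 2 = firstIdx n Y (firstIdx n Y m - 1) := by
    show firstIdx n Y (sdIdx n Y m 1 - 1) = _
    rw [hidx1]
  rw [hidx1] at htwo hhigh ⊢
  rw [hidx2] at hlow
  set i1 := firstIdx n Y m with hi1def
  obtain ⟨hi1a, hi1b, hi1max⟩ := firstIdx_spec n Y m hm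
  have hm2 : 2 ≤ m := by omega
  set i2 := firstIdx n Y (i1 - 1) with hi2def
  obtain ⟨hi2a, hi2b, hi2max⟩ := firstIdx_spec n Y (i1 - 1) (by omega)
  -- evaluate muhat
  have hmu1 : muhat n Y m i1 = pooledMean n Y i1 m :=
    sdmmsaAux_eval n Y m m i1 hm le_rfl
  have hmu2 : muhat n Y m i2 = pooledMean n Y i2 (i1 - 1) := by
    unfold muhat
    obtain ⟨f, rfl⟩ : ∃ f, m = f + 1 := ⟨m - 1, by omega⟩
    rw [sdmmsaAux_step n Y f (f + 1) i2 (by omega)]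
    exact sdmmsaAux_eval n Y f (i1 - 1) i2 (by omega) le_rfl
  rw [hmu1] at hhigh
  rw [hmu2] at hlow
  -- weight positivity
  have Wpos : ∀ i j : ℕ, 1 ≤ i → i ≤ j → j ≤ m + 1 → 0 < pooledWeight n i j := by
    intro i j h1 h2 h3
    exact pooledWeight_pos n i j h2 (fun h ha hb => hn h (by omega) (by omega))
  have hYm1 : pooledMean n Y (m + 1) (m + 1) = Y (m + 1) :=
    pooledMean_single n Y (m + 1) (ne_of_gt (hn (m + 1) (by omega) le_rfl))
  -- G1 : Y (m+1) ≤ M i1 (m+1)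
  have G1 : Y (m + 1) ≤ pooledMean n Y i1 (m + 1) := by
    rw [pooledMean_split n Y i1 m (m + 1) hi1b (by omega)
      (Wpos i1 m hi1a hi1b (by omega)) (Wpos (m + 1) (m + 1) (by omega) le_rfl le_rfl),
      hYm1]
    exact le_avg' (Wpos i1 m hi1a hi1b (by omega))
      (Wpos (m + 1) (m + 1) (by omega) le_rfl le_rfl) hhigh
  -- main inequality
  have hmain : ∀ j, 1 ≤ j → j ≤ m + 1 →
      pooledMean n Y j (m + 1) ≤ pooledMean n Y i1 (m + 1) ∧
      (j < i1 → pooledMean n Y j (m + 1) < pooledMean n Y i1 (m + 1)) := by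
    intro j hj1 hj2
    rcases lt_trichotomy j i1 with hlt | heq | hgt
    · -- j < i1 : strict
      have hwa := Wpos j (i1 - 1) hj1 (by omega) (by omega)
      have hwb := Wpos (i1 - 1 + 1) (m + 1) (by omega) (by omega) le_rfl
      have hsplit := pooledMean_split n Y j (i1 - 1) (m + 1) (by omega) (by omega) hwa hwb
      have hk : i1 - 1 + 1 = i1 := by omega
      rw [hk] at hsplit hwb
      have hstrict : pooledMean n Y j (i1 - 1) < pooledMean n Y i1 (m + 1) := by
        calc pooledMean n Y j (i1 - 1) ≤ pooledMean n Y i2 (i1 - 1) :=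
              hi2max j hj1 (by omega)
          _ < Y (m + 1) := hlow
          _ ≤ pooledMean n Y i1 (m + 1) := G1
      have : pooledMean n Y j (m + 1) < pooledMean n Y i1 (m + 1) := by
        rw [hsplit]; exact avg_lt' hwa hwb hstrict
      exact ⟨le_of_lt this, fun _ => this⟩
    · subst heq; exact ⟨le_rfl, fun h => absurd h (lt_irrefl _)⟩
    · -- j > i1 : only ≤ needed
      refine ⟨?_, fun h => absurd h (by omega)⟩
      rcases eq_or_lt_of_le hj2 with hjm | hjm
      · rw [hjm, hYm1]; exact G1
      · -- i1 < j ≤ m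
        have hjm' : j ≤ m := by omega
        have h1 : pooledMean n Y j m ≤ pooledMean n Y i1 m := hi1max j hj1 hjm'
        have hwjm := Wpos j m hj1 hjm' (by omega)
        have hwlast := Wpos (m + 1) (m + 1) (by omega) le_rfl le_rfl
        have h2 : pooledMean n Y j (m + 1) ≤ pooledMean n Y i1 m := by
          rw [pooledMean_split n Y j m (m + 1) hjm' (by omega) hwjm hwlast, hYm1]
          exact avg_le' hwjm hwlast h1 hhigh
        have hwa := Wpos i1 (j - 1) hi1a (by omega) (by omega)
        have hk : j - 1 + 1 = j := by omega
        have h3 : pooledMean n Y i1 m ≤ pooledMean n Y i1 (j - 1) := by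
          have hwb := Wpos (j - 1 + 1) m (by omega) (by omega) (by omega)
          have hsplit := pooledMean_split n Y i1 (j - 1) m (by omega) (by omega) hwa hwb
          rw [hk] at hsplit hwb
          have h1' : pooledMean n Y j m ≤
              (pooledWeight n i1 (j - 1) * pooledMean n Y i1 (j - 1)
                + pooledWeight n j m * pooledMean n Y j m)
                / (pooledWeight n i1 (j - 1) + pooledWeight n j m) := by
            rw [← hsplit]; exact h1
          rw [hsplit]
          exact avg_le_left' hwa hwb h1'
        have hwb2 := Wpos (j - 1 + 1) (m + 1) (by omega) (by omega) le_rfl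
        have hsplit2 := pooledMean_split n Y i1 (j - 1) (m + 1) (by omega) (by omega) hwa hwb2
        rw [hk] at hsplit2 hwb2
        rw [hsplit2]
        exact le_avg' hwa hwb2 (le_trans h2 h3)
  -- conclude
  have hmem : i1 ∈ {j | 1 ≤ j ∧ j ≤ m + 1 ∧ ∀ j', 1 ≤ j' → j' ≤ m + 1 →
      pooledMean n Y j' (m + 1) ≤ pooledMean n Y j (m + 1)} :=
    ⟨hi1a, by omega, fun j' h1 h2 => (hmain j' h1 h2).1⟩
  apply le_antisymm (Nat.sInf_le hmem)
  by_contra hcon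
  push_neg at hcon
  have hsmem := Nat.sInf_mem ⟨i1, hmem⟩
  set s := sInf {j | 1 ≤ j ∧ j ≤ m + 1 ∧ ∀ j', 1 ≤ j' → j' ≤ m + 1 →
      pooledMean n Y j' (m + 1) ≤ pooledMean n Y j (m + 1)} with hsdef
  obtain ⟨hs1, hs2, hsmax⟩ := hsmem
  have hlt : s < i1 := hcon
  have h5 := (hmain s hs1 hs2).2 hlt
  have h6 := hsmax i1 hi1a (by omega)
  linarith
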